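/- Bellman fixed point transfer (exact φMDPπ, abstract form): Let H be a set, S a finite set, φ : H → S surjective, γ ∈ [0,1). Suppose Q : H → ℝ and q : S → ℝ are bounded and satisfy Q(h) = r(h) + γ·∑_{h'} T(h'|h)·Q(h') and q(s) = ρ(s) + γ·∑_{s'} t(s'|s)·q(s'), where for all h: r(h) = ρ(φ(h)) and the pushforward of T(·|h) under φ equals t(·|φ(h)) (i.e., ∑_{h' : φ(h')=s'} T(h'|h) = t(s'|φ(h)) for all s'). Then Q(h) = q(φ(h)) for all h ∈ H. -/

import Mathlib

set_option maxHeartbeats 1000000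


theorem exact_aggregation_transfer {H S : Type*} [Countable H] [Fintype S]
    (φ : H → S) (hφ : Function.Surjective φ)
    (γ : ℝ) (hγ0 : 0 ≤ γ) (hγ1 : γ < 1)
    (T : H → H → ℝ) (hT0 : ∀ h h', 0 ≤ T h h') (hT1 : ∀ h, ∑' h', T h h' = 1)
    (t : S → S → ℝ) (ht0 : ∀ s s', 0 ≤ t s s') (ht1 : ∀ s, ∑ s', t s s' = 1)
    (r : H → ℝ) (ρ : S → ℝ)
    (Q : H → ℝ) (q : S → ℝ)
    (hQbd : ∃ C, ∀ h, |Q h| ≤ C) (hqbd : ∃ C, ∀ s, |q s| ≤ C)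
    (hrρ : ∀ h, r h = ρ (φ h))
    (hpush : ∀ h s', ∑' h' : {h' // φ h' = s'}, T h h'.1 = t (φ h) s')
    (hQ : ∀ h, Q h = r h + γ * ∑' h', T h h' * Q h')
    (hq : ∀ s, q s = ρ s + γ * ∑ s', t s s' * q s') :
    ∀ h, Q h = q (φ h) := by
  -- T h is summable
  have hTsum : ∀ h, Summable (T h) := by
    intro h
    by_contra hc
    have := hT1 h
    rw [tsum_eq_zero_of_not_summable hc] at this
    exact one_ne_zero this.symm
  obtain ⟨CQ, hCQ⟩ := hQbd
  obtain ⟨Cq, hCq⟩ := hqbd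
  set D : H → ℝ := fun h => Q h - q (φ h) with hD
  set C : ℝ := CQ + Cq with hC
  have hDbd : ∀ h, |D h| ≤ C := by
    intro h
    calc |D h| ≤ |Q h| + |q (φ h)| := abs_sub _ _
    _ ≤ CQ + Cq := add_le_add (hCQ h) (hCq (φ h))
  -- summability of products with bounded functions
  have hsummul : ∀ (h : H) (f : H → ℝ) (Cf : ℝ), (∀ h', |f h'| ≤ Cf) →
      Summable (fun h' => T h h' * f h') := by
    intro h f Cf hCf
    apply Summable.of_norm_bounded (g := fun h' => T h h' * Cf)
    · exact (hTsum h).mul_right Cf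
    · intro h'
      rw [Real.norm_eq_abs, abs_mul, abs_of_nonneg (hT0 h h')]
      exact mul_le_mul_of_nonneg_left (hCf h') (hT0 h h')
  -- key identity: pushforward
  have hkey : ∀ h, (∑' h', T h h' * q (φ h')) = ∑ s', t (φ h) s' * q s' := by
    intro h
    have hsub : Summable (fun h' => T h h' * q (φ h')) :=
      hsummul h (fun h' => q (φ h')) Cq (fun h' => hCq (φ h'))
    have hsig : Summable (fun p : Σ s' : S, {h' // φ h' = s'} =>
        T h ((Equiv.sigmaFiberEquiv φ) p) * q (φ ((Equiv.sigmaFiberEquiv φ) p))) :=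
      hsub.comp_injective (Equiv.sigmaFiberEquiv φ).injective
    calc (∑' h', T h h' * q (φ h'))
        = ∑' p : Σ s' : S, {h' // φ h' = s'},
            T h ((Equiv.sigmaFiberEquiv φ) p) * q (φ ((Equiv.sigmaFiberEquiv φ) p)) :=
          ((Equiv.sigmaFiberEquiv φ).tsum_eq _).symm
      _ = ∑' (s' : S) (h' : {h' // φ h' = s'}),
            T h ((Equiv.sigmaFiberEquiv φ) ⟨s', h'⟩) * q (φ ((Equiv.sigmaFiberEquiv φ) ⟨s', h'⟩)) :=
          Summable.tsum_sigma hsig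
      _ = ∑' s' : S, ∑' h' : {h' // φ h' = s'}, T h h'.1 * q s' := by
          refine tsum_congr fun s' => tsum_congr fun h' => ?_
          simp [Equiv.sigmaFiberEquiv, h'.2]
      _ = ∑' s' : S, (∑' h' : {h' // φ h' = s'}, T h h'.1) * q s' := by
          congr 1; funext s'; exact tsum_mul_right
      _ = ∑ s' : S, (∑' h' : {h' // φ h' = s'}, T h h'.1) * q s' :=
          tsum_fintype _
      _ = ∑ s', t (φ h) s' * q s' := by
          apply Finset.sum_congr rfl; intro s' _; rw [hpush h s']
  -- contraction relation
  have hrel : ∀ h, D h = γ * ∑' h', T h h' * D h' := by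
    intro h
    have h1 : ∀ h', T h h' * D h' = T h h' * Q h' - T h h' * q (φ h') := by
      intro h'; simp [hD]; ring
    have hsQ : Summable (fun h' => T h h' * Q h') := hsummul h Q CQ hCQ
    have hsq : Summable (fun h' => T h h' * q (φ h')) :=
      hsummul h (fun h' => q (φ h')) Cq (fun h' => hCq (φ h'))
    have : (∑' h', T h h' * D h') = (∑' h', T h h' * Q h') - ∑' h', T h h' * q (φ h') := by
      rw [← Summable.tsum_sub hsQ hsq]; exact tsum_congr h1
    rw [this, hkey h, hD]
    simp only
    rw [hQ h, hq (φ h), hrρ h]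
    ring
  -- induction: |D h| ≤ γ^n * C
  have hiter : ∀ n : ℕ, ∀ h, |D h| ≤ γ ^ n * C := by
    intro n
    induction n with
    | zero => simpa using hDbd
    | succ n ih =>
      intro h
      have hsD : Summable (fun h' => T h h' * D h') :=
        hsummul h D C hDbd
      have habs : |∑' h', T h h' * D h'| ≤ γ ^ n * C := by
        calc |∑' h', T h h' * D h'| ≤ ∑' h', |T h h' * D h'| := by
              have h1 : ‖∑' h', T h h' * D h'‖ ≤ ∑' h', ‖T h h' * D h'‖ :=
                norm_tsum_le_tsum_norm (by simp only [Real.norm_eq_abs]; exact hsD.abs)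
              simp only [Real.norm_eq_abs] at h1
              exact h1
          _ ≤ ∑' h', T h h' * (γ ^ n * C) := by
              apply Summable.tsum_le_tsum _ hsD.abs ((hTsum h).mul_right _)
              intro h'
              rw [abs_mul, abs_of_nonneg (hT0 h h')]
              exact mul_le_mul_of_nonneg_left (ih h') (hT0 h h')
          _ = γ ^ n * C := by rw [tsum_mul_right, hT1 h, one_mul]
      calc |D h| = γ * |∑' h', T h h' * D h'| := by
            rw [hrel h, abs_mul, abs_of_nonneg hγ0]
        _ ≤ γ * (γ ^ n * C) := mul_le_mul_of_nonneg_left habs hγ0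
        _ = γ ^ (n + 1) * C := by ring
  intro h
  have hzero : |D h| ≤ 0 := by
    have hlim : Filter.Tendsto (fun n : ℕ => γ ^ n * C) Filter.atTop (nhds 0) := by
      simpa using (tendsto_pow_atTop_nhds_zero_of_lt_one hγ0 hγ1).mul_const C
    exact le_of_tendsto_of_tendsto' tendsto_const_nhds hlim (fun n => hiter n h)
  have h0 : D h = 0 := abs_eq_zero.mp (le_antisymm hzero (abs_nonneg _))
  have h0' : Q h - q (φ h) = 0 := h0
  linarith
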